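/- Assume: (R-bound) |r x s a| ≤ R_max for all x, s, a; (R-Lip) |r x₁ s a − r x₂ s a| ≤ C_r · ‖x₁ − x₂‖ for all x₁, x₂, s, a; (P-Lip) ∑_{s'} |P x₁ s a s' − P x₂ s a s'| ≤ C_P · ‖x₁ − x₂‖ for all x₁, x₂, s, a. Set B_V = (R_max + τ · log |A|) / (1 − γ). For each x let V_x : S → ℝ satisfy 𝒯_x V_x = V_x, and define the optimal soft Q-value Q_x(s,a) = r x s a + γ · ∑_{s'} P x s a s' · V_x(s'). Then for all x₁, x₂ and all s, a: |Q_{x₁}(s,a) − Q_{x₂}(s,a)| ≤ ( C_r + γ · (C_r + γ · C_P · B_V)/(1 − γ) + γ · C_P · B_V ) · ‖x₁ − x₂‖. -/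

import Mathlib

open scoped BigOperators

lemma lse_le_lse {A : Type*} [Fintype A] [Nonempty A] {τ : ℝ} (hτ : 0 < τ)
    (f g : A → ℝ) (c : ℝ) (h : ∀ a, f a ≤ g a + c) :
    τ * Real.log (∑ a, Real.exp (f a / τ)) ≤ τ * Real.log (∑ a, Real.exp (g a / τ)) + c := by
  have hpos : (0:ℝ) < ∑ a, Real.exp (g a / τ) :=
    Finset.sum_pos (fun a _ => Real.exp_pos _) Finset.univ_nonempty
  have h1 : ∑ a, Real.exp (f a / τ) ≤ Real.exp (c/τ) * ∑ a, Real.exp (g a / τ) := by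
    rw [Finset.mul_sum]
    refine Finset.sum_le_sum fun a _ => ?_
    rw [← Real.exp_add]
    apply Real.exp_le_exp.mpr
    have h' : f a / τ ≤ (g a + c) / τ := by gcongr; exact h a
    rw [add_div] at h'
    linarith
  have h2 : Real.log (∑ a, Real.exp (f a / τ)) ≤ c/τ + Real.log (∑ a, Real.exp (g a / τ)) := by
    calc Real.log (∑ a, Real.exp (f a / τ)) ≤ Real.log (Real.exp (c/τ) * ∑ a, Real.exp (g a / τ)) :=
          Real.log_le_log (by positivity) h1
      _ = c/τ + Real.log (∑ a, Real.exp (g a / τ)) := by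
          rw [Real.log_mul (Real.exp_ne_zero _) (ne_of_gt hpos), Real.log_exp]
  calc τ * Real.log (∑ a, Real.exp (f a / τ)) ≤ τ * (c/τ + Real.log (∑ a, Real.exp (g a / τ))) :=
        by nlinarith [h2]
    _ = τ * Real.log (∑ a, Real.exp (g a / τ)) + c := by field_simp; ring

lemma lse_abs_diff {A : Type*} [Fintype A] [Nonempty A] {τ : ℝ} (hτ : 0 < τ)
    (f g : A → ℝ) (c : ℝ) (h : ∀ a, |f a - g a| ≤ c) :
    |τ * Real.log (∑ a, Real.exp (f a / τ)) - τ * Real.log (∑ a, Real.exp (g a / τ))| ≤ c := by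
  rw [abs_sub_le_iff]
  constructor
  · have := lse_le_lse hτ f g c (fun a => by have := abs_le.1 (h a); linarith [this.2])
    linarith
  · have := lse_le_lse hτ g f c (fun a => by have := abs_le.1 (h a); linarith [this.1])
    linarith

lemma lse_abs_bound {A : Type*} [Fintype A] [Nonempty A] {τ : ℝ} (hτ : 0 < τ)
    (f : A → ℝ) (M : ℝ) (h : ∀ a, |f a| ≤ M) :
    |τ * Real.log (∑ a, Real.exp (f a / τ))| ≤ M + τ * Real.log (Fintype.card A) := by
  have hcard : (1:ℝ) ≤ (Fintype.card A : ℝ) := by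
    exact_mod_cast Fintype.card_pos
  have hlog0 : 0 ≤ τ * Real.log (Fintype.card A) := by
    have := Real.log_nonneg hcard
    positivity
  have hup : τ * Real.log (∑ a, Real.exp (f a / τ)) ≤ τ * Real.log (Fintype.card A) + M := by
    have h0 : τ * Real.log (∑ a : A, Real.exp ((0:ℝ) / τ)) = τ * Real.log (Fintype.card A) := by
      simp [Real.exp_zero]
    have := lse_le_lse hτ f (fun _ => (0:ℝ)) M (fun a => by show f a ≤ 0 + M; have := abs_le.1 (h a); linarith [this.2])
    rw [h0] at this
    linarith
  obtain ⟨a₀⟩ := ‹Nonempty A›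
  have hlo : f a₀ ≤ τ * Real.log (∑ a, Real.exp (f a / τ)) := by
    have h1 : Real.exp (f a₀ / τ) ≤ ∑ a, Real.exp (f a / τ) :=
      Finset.single_le_sum (f := fun a => Real.exp (f a / τ)) (fun a _ => (Real.exp_pos _).le) (Finset.mem_univ a₀)
    have h2 : f a₀ / τ ≤ Real.log (∑ a, Real.exp (f a / τ)) := by
      rw [← Real.log_exp (f a₀ / τ)]
      exact Real.log_le_log (Real.exp_pos _) h1
    calc f a₀ = τ * (f a₀ / τ) := by field_simp
      _ ≤ _ := by nlinarith
  have := abs_le.1 (h a₀)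
  rw [abs_le]
  constructor <;> linarith

noncomputable section

variable {S A X : Type*} [Fintype S] [Fintype A]
  [NormedAddCommGroup X] [NormedSpace ℝ X]

/-- Softmax (entropy-regularized) Bellman optimality operator. -/
def softBellman (r : X → S → A → ℝ) (P : X → S → A → S → ℝ)
    (γ τ : ℝ) (x : X) (V : S → ℝ) (s : S) : ℝ :=
  τ * Real.log (∑ a, Real.exp ((r x s a + γ * ∑ s', P x s a s' * V s') / τ))

theorem soft_q_value_lipschitz_in_parameter
    [Nonempty S] [Nonempty A]
    (r : X → S → A → ℝ) (P : X → S → A → S → ℝ)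
    (hP0 : ∀ x s a s', 0 ≤ P x s a s')
    (hP1 : ∀ x s a, ∑ s', P x s a s' = 1)
    (γ : ℝ) (hγ0 : 0 < γ) (hγ1 : γ < 1)
    (τ : ℝ) (hτ : 0 < τ)
    (Rmax : ℝ) (hr : ∀ x s a, |r x s a| ≤ Rmax)
    (Cr CP : ℝ) (hCr : 0 ≤ Cr) (hCP : 0 ≤ CP)
    (hrLip : ∀ x₁ x₂ s a, |r x₁ s a - r x₂ s a| ≤ Cr * ‖x₁ - x₂‖)
    (hPLip : ∀ x₁ x₂ s a, (∑ s', |P x₁ s a s' - P x₂ s a s'|) ≤ CP * ‖x₁ - x₂‖)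
    (BV : ℝ) (hBV : BV = (Rmax + τ * Real.log (Fintype.card A)) / (1 - γ))
    (V : X → S → ℝ)
    (hfix : ∀ x s, softBellman r P γ τ x (V x) s = V x s)
    (Q : X → S → A → ℝ)
    (hQ : ∀ x s a, Q x s a = r x s a + γ * ∑ s', P x s a s' * V x s') :
    ∀ (x₁ x₂ : X) (s : S) (a : A),
      |Q x₁ s a - Q x₂ s a| ≤
        (Cr + γ * (Cr + γ * CP * BV) / (1 - γ) + γ * CP * BV) * ‖x₁ - x₂‖ := by
  have h1γ : (0:ℝ) < 1 - γ := by linarith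
  -- sup norm of V x
  set M : X → ℝ := fun x => Finset.univ.sup' Finset.univ_nonempty (fun s => |V x s|) with hMdef
  have hM_le : ∀ x s', |V x s'| ≤ M x := fun x s' =>
    Finset.le_sup' (fun s => |V x s|) (Finset.mem_univ s')
  -- |∑ P V| ≤ M x
  have hPV : ∀ x s a, |∑ s', P x s a s' * V x s'| ≤ M x := by
    intro x s a
    calc |∑ s', P x s a s' * V x s'| ≤ ∑ s', |P x s a s' * V x s'| :=
          Finset.abs_sum_le_sum_abs _ _
      _ ≤ ∑ s', P x s a s' * M x := by
          refine Finset.sum_le_sum fun s' _ => ?_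
          rw [abs_mul, abs_of_nonneg (hP0 x s a s')]
          exact mul_le_mul_of_nonneg_left (hM_le x s') (hP0 x s a s')
      _ = M x := by rw [← Finset.sum_mul, hP1, one_mul]
  -- M x ≤ BV
  have hMB : ∀ x, M x ≤ BV := by
    intro x
    obtain ⟨s₀, -, hs₀⟩ := Finset.exists_mem_eq_sup' (Finset.univ_nonempty) (fun s => |V x s|)
    have hfx := hfix x s₀
    unfold softBellman at hfx
    have hb := lse_abs_bound hτ
        (fun a => r x s₀ a + γ * ∑ s', P x s₀ a s' * V x s') (Rmax + γ * M x)
        (fun a => by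
          calc |r x s₀ a + γ * ∑ s', P x s₀ a s' * V x s'|
              ≤ |r x s₀ a| + |γ * ∑ s', P x s₀ a s' * V x s'| := abs_add_le _ _
            _ ≤ Rmax + γ * M x := by
                rw [abs_mul, abs_of_pos hγ0]
                exact add_le_add (hr x s₀ a)
                  (mul_le_mul_of_nonneg_left (hPV x s₀ a) hγ0.le))
    rw [hfx] at hb
    have hMs : M x = |V x s₀| := hs₀
    rw [← hMs] at hb
    rw [hBV, le_div_iff₀ h1γ]
    nlinarith
  intro x₁ x₂ s a
  set d := ‖x₁ - x₂‖ with hd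
  have hd0 : 0 ≤ d := norm_nonneg _
  -- key transition sum bound
  have key : ∀ (s : S) (a : A) (D : ℝ), (∀ s', |V x₁ s' - V x₂ s'| ≤ D) →
      |∑ s', P x₁ s a s' * V x₁ s' - ∑ s', P x₂ s a s' * V x₂ s'| ≤ CP * d * BV + D := by
    intro s a D hD
    have hBV0 : 0 ≤ BV := le_trans (abs_nonneg _) ((hM_le x₁ (Classical.arbitrary S)).trans (hMB x₁))
    have e : ∑ s', P x₁ s a s' * V x₁ s' - ∑ s', P x₂ s a s' * V x₂ s'
        = ∑ s', ((P x₁ s a s' - P x₂ s a s') * V x₁ s' + P x₂ s a s' * (V x₁ s' - V x₂ s')) := by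
      rw [← Finset.sum_sub_distrib]
      exact Finset.sum_congr rfl fun s' _ => by ring
    calc |∑ s', P x₁ s a s' * V x₁ s' - ∑ s', P x₂ s a s' * V x₂ s'|
        = |∑ s', ((P x₁ s a s' - P x₂ s a s') * V x₁ s' + P x₂ s a s' * (V x₁ s' - V x₂ s'))| := by
          rw [e]
      _ ≤ ∑ s', |(P x₁ s a s' - P x₂ s a s') * V x₁ s' + P x₂ s a s' * (V x₁ s' - V x₂ s')| :=
          Finset.abs_sum_le_sum_abs _ _
      _ ≤ ∑ s', (|P x₁ s a s' - P x₂ s a s'| * BV + P x₂ s a s' * D) := by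
          refine Finset.sum_le_sum fun s' _ => ?_
          calc |(P x₁ s a s' - P x₂ s a s') * V x₁ s' + P x₂ s a s' * (V x₁ s' - V x₂ s')|
              ≤ |(P x₁ s a s' - P x₂ s a s') * V x₁ s'| + |P x₂ s a s' * (V x₁ s' - V x₂ s')| :=
                abs_add_le _ _
            _ ≤ |P x₁ s a s' - P x₂ s a s'| * BV + P x₂ s a s' * D := by
                rw [abs_mul, abs_mul, abs_of_nonneg (hP0 x₂ s a s')]
                exact add_le_add
                  (mul_le_mul_of_nonneg_left ((hM_le x₁ s').trans (hMB x₁)) (abs_nonneg _))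
                  (mul_le_mul_of_nonneg_left (hD s') (hP0 x₂ s a s'))
      _ = (∑ s', |P x₁ s a s' - P x₂ s a s'|) * BV + (∑ s', P x₂ s a s') * D := by
          rw [Finset.sum_add_distrib, ← Finset.sum_mul, ← Finset.sum_mul]
      _ ≤ CP * d * BV + D := by
          rw [hP1, one_mul]
          exact add_le_add (mul_le_mul_of_nonneg_right (hPLip x₁ x₂ s a) hBV0) le_rfl
  -- Lipschitz bound on V
  set D : ℝ := Finset.univ.sup' Finset.univ_nonempty (fun s => |V x₁ s - V x₂ s|) with hDdef
  have hD_le : ∀ s', |V x₁ s' - V x₂ s'| ≤ D := fun s' =>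
    Finset.le_sup' (fun s => |V x₁ s - V x₂ s|) (Finset.mem_univ s')
  set E : ℝ := (Cr + γ * CP * BV) / (1 - γ) with hEdef
  have hDE : D ≤ E * d := by
    obtain ⟨s₀, -, hs₀⟩ := Finset.exists_mem_eq_sup' (Finset.univ_nonempty)
      (fun s => |V x₁ s - V x₂ s|)
    have hb := lse_abs_diff hτ
        (fun a => r x₁ s₀ a + γ * ∑ s', P x₁ s₀ a s' * V x₁ s')
        (fun a => r x₂ s₀ a + γ * ∑ s', P x₂ s₀ a s' * V x₂ s')
        (Cr * d + γ * (CP * d * BV + D))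
        (fun a => by
          calc |(r x₁ s₀ a + γ * ∑ s', P x₁ s₀ a s' * V x₁ s')
                - (r x₂ s₀ a + γ * ∑ s', P x₂ s₀ a s' * V x₂ s')|
              = |(r x₁ s₀ a - r x₂ s₀ a)
                + γ * ((∑ s', P x₁ s₀ a s' * V x₁ s') - ∑ s', P x₂ s₀ a s' * V x₂ s')| := by
                ring_nf
            _ ≤ |r x₁ s₀ a - r x₂ s₀ a|
                + |γ * ((∑ s', P x₁ s₀ a s' * V x₁ s') - ∑ s', P x₂ s₀ a s' * V x₂ s')| :=
                abs_add_le _ _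
            _ ≤ Cr * d + γ * (CP * d * BV + D) := by
                rw [abs_mul, abs_of_pos hγ0]
                exact add_le_add (hrLip x₁ x₂ s₀ a)
                  (mul_le_mul_of_nonneg_left (key s₀ a D hD_le) hγ0.le))
    have hV1 := hfix x₁ s₀
    have hV2 := hfix x₂ s₀
    unfold softBellman at hV1 hV2
    rw [hV1, hV2] at hb
    have hDs : D = |V x₁ s₀ - V x₂ s₀| := hs₀
    rw [hEdef, div_mul_eq_mul_div, le_div_iff₀ h1γ]
    rw [← hDs] at hb
    nlinarith
  have hkey := key s a D hD_le
  have hD0 : 0 ≤ D := le_trans (abs_nonneg _) (hD_le (Classical.arbitrary S))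
  calc |Q x₁ s a - Q x₂ s a|
      = |(r x₁ s a - r x₂ s a)
        + γ * ((∑ s', P x₁ s a s' * V x₁ s') - ∑ s', P x₂ s a s' * V x₂ s')| := by
        rw [hQ, hQ]; ring_nf
    _ ≤ |r x₁ s a - r x₂ s a|
        + |γ * ((∑ s', P x₁ s a s' * V x₁ s') - ∑ s', P x₂ s a s' * V x₂ s')| := abs_add_le _ _
    _ ≤ Cr * d + γ * (CP * d * BV + D) := by
        rw [abs_mul, abs_of_pos hγ0]
        exact add_le_add (hrLip x₁ x₂ s a) (mul_le_mul_of_nonneg_left hkey hγ0.le)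
    _ ≤ (Cr + γ * (Cr + γ * CP * BV) / (1 - γ) + γ * CP * BV) * d := by
        have hEq : γ * (Cr + γ * CP * BV) / (1 - γ) = γ * E := by
          rw [hEdef, mul_div_assoc]
        rw [hEq]
        nlinarith [mul_le_mul_of_nonneg_left hDE hγ0.le]
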